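/- The CDF of the reversed digit set satisfies the symmetry F_{B̌}(x) = 1 - F_B(1 - x) for all x ∈ [0,1], where B̌ is the reversal of B, i.e., B̌(n) = B(N-1-n). -/

import Mathlib

open MeasureTheory Set
open scoped ENNReal

namespace CantorRevAux

lemma map_meas (N d : ℕ) : Measurable (fun y : ℝ => (y + (d : ℝ)) / N) :=
  (measurable_id.add_const _).div_const _

lemma preimage_Iic (N : ℕ) (hN : 0 < N) (d : ℕ) (x : ℝ) :
    (fun y : ℝ => (y + (d : ℝ)) / N) ⁻¹' (Iic x) = Iic ((N : ℝ) * x - d) := by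
  have hN' : (0 : ℝ) < N := by exact_mod_cast hN
  ext y
  simp only [mem_preimage, mem_Iic, div_le_iff₀ hN']
  constructor <;> intro h <;> nlinarith

lemma preimage_singleton (N : ℕ) (hN : 0 < N) (d : ℕ) (p : ℝ) :
    (fun y : ℝ => (y + (d : ℝ)) / N) ⁻¹' {p} = {(N : ℝ) * p - d} := by
  have hN' : (0 : ℝ) < N := by exact_mod_cast hN
  ext y
  simp only [mem_preimage, mem_singleton_iff, div_eq_iff hN'.ne']
  constructor <;> intro h <;> nlinarith

lemma inv_apply (N : ℕ) (D : Finset ℕ) (μ : Measure ℝ)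
    (hinv : μ = (D.card : ℝ≥0∞)⁻¹ • ∑ d ∈ D, μ.map (fun x : ℝ => (x + (d : ℝ)) / N))
    {s : Set ℝ} (hs : MeasurableSet s) :
    μ s = (D.card : ℝ≥0∞)⁻¹ * ∑ d ∈ D, μ ((fun y : ℝ => (y + (d : ℝ)) / N) ⁻¹' s) := by
  conv_lhs => rw [hinv]
  rw [Measure.smul_apply, Measure.finset_sum_apply]
  simp only [smul_eq_mul]
  congr 1
  exact Finset.sum_congr rfl fun d _ => Measure.map_apply (map_meas N d) hs

lemma compl_null (μ : Measure ℝ) [IsProbabilityMeasure μ] (hsupp : μ (Icc 0 1) = 1) :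
    μ (Icc (0:ℝ) 1)ᶜ = 0 := by
  rw [measure_compl measurableSet_Icc (measure_ne_top μ _), hsupp, measure_univ, tsub_self]

lemma Iio_zero_null (μ : Measure ℝ) [IsProbabilityMeasure μ] (hsupp : μ (Icc 0 1) = 1) :
    μ (Iio (0:ℝ)) = 0 :=
  measure_mono_null (fun y hy => by simp only [mem_compl_iff, mem_Icc, not_and_or, not_le]
                                    exact Or.inl (mem_Iio.1 hy)) (compl_null μ hsupp)

lemma Iic_neg_null (μ : Measure ℝ) [IsProbabilityMeasure μ] (hsupp : μ (Icc 0 1) = 1)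
    {x : ℝ} (hx : x < 0) : μ (Iic x) = 0 :=
  measure_mono_null (fun y hy => mem_Iio.2 (lt_of_le_of_lt (mem_Iic.1 hy) hx))
    (Iio_zero_null μ hsupp)

lemma Iic_one (μ : Measure ℝ) [IsProbabilityMeasure μ] (hsupp : μ (Icc 0 1) = 1)
    {x : ℝ} (hx : 1 ≤ x) : μ (Iic x) = 1 := by
  refine le_antisymm prob_le_one ?_
  calc (1 : ℝ≥0∞) = μ (Icc 0 1) := hsupp.symm
    _ ≤ μ (Iic x) := measure_mono (fun y hy => mem_Iic.2 (le_trans (mem_Icc.1 hy).2 hx))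

/-- Atomlessness of the invariant measure. -/
lemma atomless (N : ℕ) (hN : 2 ≤ N) (D : Finset ℕ) (hD : D ⊆ Finset.range N)
    (hcard : 2 ≤ D.card) (μ : Measure ℝ) [IsProbabilityMeasure μ]
    (hinv : μ = (D.card : ℝ≥0∞)⁻¹ • ∑ d ∈ D, μ.map (fun x : ℝ => (x + (d : ℝ)) / N))
    (p : ℝ) : μ {p} = 0 := by
  classical
  have hN0 : 0 < N := by omega
  have hsingle : ∀ q : ℝ,
      μ {q} = (D.card : ℝ≥0∞)⁻¹ * ∑ d ∈ D, μ {(N : ℝ) * q - (d : ℝ)} := by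
    intro q
    rw [inv_apply N D μ hinv (measurableSet_singleton q)]
    congr 1
    exact Finset.sum_congr rfl fun d _ => by rw [preimage_singleton N hN0 d q]
  have key : ∀ n : ℕ, ∀ q : ℝ, ∃ S : Finset ℝ,
      (∀ y ∈ S, ∃ c : ℕ, c < N ^ n ∧ y = (N : ℝ) ^ n * q - (c : ℕ)) ∧
      μ {q} ≤ ((D.card : ℝ≥0∞))⁻¹ ^ n * μ ↑S := by
    intro n
    induction n with
    | zero =>
      intro q
      refine ⟨{q}, ?_, by simp⟩
      intro y hy
      refine ⟨0, by simp, ?_⟩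
      simp only [Finset.mem_singleton] at hy
      simp [hy]
    | succ n ih =>
      intro q
      choose S hS hle using ih
      refine ⟨D.biUnion (fun d => S ((N : ℝ) * q - d)), ?_, ?_⟩
      · intro y hy
        simp only [Finset.mem_biUnion] at hy
        obtain ⟨d, hd, hyd⟩ := hy
        obtain ⟨c, hc, hyc⟩ := hS ((N : ℝ) * q - d) y hyd
        have hdN : d < N := Finset.mem_range.1 (hD hd)
        refine ⟨N ^ n * d + c, ?_, ?_⟩
        · calc N ^ n * d + c < N ^ n * d + N ^ n := by omega
            _ = N ^ n * (d + 1) := by ring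
            _ ≤ N ^ n * N := Nat.mul_le_mul_left _ (by omega)
            _ = N ^ (n + 1) := by ring
        · rw [hyc]
          push_cast
          ring
      · -- disjointness
        have hdisj : (↑D : Set ℕ).PairwiseDisjoint
            (fun d => (↑(S ((N : ℝ) * q - d)) : Set ℝ)) := by
          intro d1 hd1 d2 hd2 hne
          simp only [Function.onFun, Set.disjoint_left]
          intro y hy1 hy2
          obtain ⟨c1, hc1, hyc1⟩ := hS ((N : ℝ) * q - d1) y (by exact_mod_cast hy1)
          obtain ⟨c2, hc2, hyc2⟩ := hS ((N : ℝ) * q - d2) y (by exact_mod_cast hy2)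
          have hreal : ((N ^ n * d1 + c1 : ℕ) : ℝ) = ((N ^ n * d2 + c2 : ℕ) : ℝ) := by
            push_cast
            nlinarith [hyc1, hyc2]
          have hnat : N ^ n * d1 + c1 = N ^ n * d2 + c2 := by exact_mod_cast hreal
          have hNn : 0 < N ^ n := pow_pos hN0 n
          have h1 : (N ^ n * d1 + c1) / N ^ n = d1 := by
            rw [Nat.mul_add_div hNn, Nat.div_eq_of_lt hc1, add_zero]
          have h2 : (N ^ n * d2 + c2) / N ^ n = d2 := by
            rw [Nat.mul_add_div hNn, Nat.div_eq_of_lt hc2, add_zero]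
          exact hne (by rw [← h1, ← h2, hnat])
        have hmeas : ∀ d ∈ D, MeasurableSet (↑(S ((N : ℝ) * q - d)) : Set ℝ) :=
          fun d _ => (S ((N : ℝ) * q - d)).finite_toSet.measurableSet
        have hunion : μ ↑(D.biUnion (fun d => S ((N : ℝ) * q - d)))
            = ∑ d ∈ D, μ ↑(S ((N : ℝ) * q - d)) := by
          rw [Finset.coe_biUnion]
          exact measure_biUnion_finset hdisj hmeas
        calc μ {q} = (D.card : ℝ≥0∞)⁻¹ * ∑ d ∈ D, μ {(N : ℝ) * q - (d : ℝ)} := hsingle q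
          _ ≤ (D.card : ℝ≥0∞)⁻¹ *
              ∑ d ∈ D, (D.card : ℝ≥0∞)⁻¹ ^ n * μ ↑(S ((N : ℝ) * q - d)) := by
            exact mul_le_mul_of_nonneg_left (Finset.sum_le_sum fun d _ => hle _) zero_le
          _ = (D.card : ℝ≥0∞)⁻¹ ^ (n + 1) *
              ∑ d ∈ D, μ ↑(S ((N : ℝ) * q - d)) := by
            rw [← Finset.mul_sum, pow_succ, ← mul_assoc, mul_comm ((D.card : ℝ≥0∞)⁻¹ ^ n)]
          _ = _ := by rw [hunion]
  have hbound : ∀ n : ℕ, μ {p} ≤ ((D.card : ℝ≥0∞))⁻¹ ^ n := by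
    intro n
    obtain ⟨S, _, hle⟩ := key n p
    calc μ {p} ≤ ((D.card : ℝ≥0∞))⁻¹ ^ n * μ ↑S := hle
      _ ≤ ((D.card : ℝ≥0∞))⁻¹ ^ n * 1 := mul_le_mul_of_nonneg_left prob_le_one zero_le
      _ = _ := mul_one _
  have hlt : (D.card : ℝ≥0∞)⁻¹ < 1 := by
    rw [ENNReal.inv_lt_one]
    exact_mod_cast (by omega : 1 < D.card)
  have htend := ENNReal.tendsto_pow_atTop_nhds_zero_of_lt_one hlt
  exact le_antisymm (ge_of_tendsto' htend hbound) zero_le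

/-- Uniqueness of the invariant probability measure supported on `[0,1]`. -/
lemma Iic_eq (N : ℕ) (hN : 2 ≤ N) (D : Finset ℕ)
    (hne : D.Nonempty)
    (μ1 μ2 : Measure ℝ) [IsProbabilityMeasure μ1] [IsProbabilityMeasure μ2]
    (h1supp : μ1 (Icc 0 1) = 1) (h2supp : μ2 (Icc 0 1) = 1)
    (h1inv : μ1 = (D.card : ℝ≥0∞)⁻¹ • ∑ d ∈ D, μ1.map (fun x : ℝ => (x + (d : ℝ)) / N))
    (h2inv : μ2 = (D.card : ℝ≥0∞)⁻¹ • ∑ d ∈ D, μ2.map (fun x : ℝ => (x + (d : ℝ)) / N))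
    (x : ℝ) : μ1 (Iic x) = μ2 (Iic x) := by
  classical
  have hN0 : 0 < N := by omega
  have hNR : (2 : ℝ) ≤ N := by exact_mod_cast hN
  have hm0 : 0 < D.card := hne.card_pos
  have hmR : (0 : ℝ) < D.card := by exact_mod_cast hm0
  set f : ℝ → ℝ := fun y => (μ1 (Iic y)).toReal with hfdef
  set g : ℝ → ℝ := fun y => (μ2 (Iic y)).toReal with hgdef
  -- functional equations
  have heq : ∀ (μ : Measure ℝ), IsProbabilityMeasure μ →
      μ = (D.card : ℝ≥0∞)⁻¹ • ∑ d ∈ D, μ.map (fun x : ℝ => (x + (d : ℝ)) / N) →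
      ∀ y : ℝ, (μ (Iic y)).toReal
        = (D.card : ℝ)⁻¹ * ∑ d ∈ D, (μ (Iic ((N : ℝ) * y - d))).toReal := by
    intro μ hμ hinv y
    have h1 : μ (Iic y) = (D.card : ℝ≥0∞)⁻¹ * ∑ d ∈ D, μ (Iic ((N : ℝ) * y - d)) := by
      rw [inv_apply N D μ hinv measurableSet_Iic]
      congr 1
      exact Finset.sum_congr rfl fun d _ => by rw [preimage_Iic N hN0 d y]
    rw [h1, ENNReal.toReal_mul, ENNReal.toReal_inv,
      ENNReal.toReal_sum (fun d _ => measure_ne_top μ _)]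
    simp
  have hfeq := heq μ1 inferInstance h1inv
  have hgeq := heq μ2 inferInstance h2inv
  set H : ℝ → ℝ := fun y => f y - g y with hHdef
  have hHeq : ∀ y : ℝ, H y = (D.card : ℝ)⁻¹ * ∑ d ∈ D, H ((N : ℝ) * y - d) := by
    intro y
    simp only [hHdef, hfdef, hgdef, hfeq y, hgeq y, Finset.sum_sub_distrib, mul_sub]
  have hfmono : Monotone f := fun a b hab =>
    ENNReal.toReal_mono (measure_ne_top _ _) (measure_mono (Iic_subset_Iic.2 hab))
  have hgmono : Monotone g := fun a b hab =>
    ENNReal.toReal_mono (measure_ne_top _ _) (measure_mono (Iic_subset_Iic.2 hab))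
  have hf01 : ∀ y, 0 ≤ f y ∧ f y ≤ 1 := fun y =>
    ⟨ENNReal.toReal_nonneg, by
      calc (μ1 (Iic y)).toReal ≤ (1 : ℝ≥0∞).toReal :=
        ENNReal.toReal_mono ENNReal.one_ne_top prob_le_one
        _ = 1 := ENNReal.toReal_one⟩
  have hg01 : ∀ y, 0 ≤ g y ∧ g y ≤ 1 := fun y =>
    ⟨ENNReal.toReal_nonneg, by
      calc (μ2 (Iic y)).toReal ≤ (1 : ℝ≥0∞).toReal :=
        ENNReal.toReal_mono ENNReal.one_ne_top prob_le_one
        _ = 1 := ENNReal.toReal_one⟩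
  have hHzero : ∀ y : ℝ, y ∉ Icc (0:ℝ) 1 → H y = 0 := by
    intro y hy
    simp only [mem_Icc, not_and_or, not_le] at hy
    rcases hy with hy | hy
    · simp only [hHdef, hfdef, hgdef, Iic_neg_null μ1 h1supp hy,
        Iic_neg_null μ2 h2supp hy, ENNReal.toReal_zero, sub_zero]
    · simp only [hHdef, hfdef, hgdef, Iic_one μ1 h1supp hy.le, Iic_one μ2 h2supp hy.le,
        ENNReal.toReal_one, sub_self]
  have hHbd : ∀ y : ℝ, ‖H y‖ ≤ indicator (Icc (0:ℝ) 1) (fun _ => (1:ℝ)) y := by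
    intro y
    by_cases hy : y ∈ Icc (0:ℝ) 1
    · rw [indicator_of_mem hy]
      rw [Real.norm_eq_abs, abs_le]
      have h1 := hf01 y
      have h2 := hg01 y
      have hH : H y = f y - g y := rfl
      constructor <;> rw [hH] <;> linarith [h1.1, h1.2, h2.1, h2.2]
    · rw [indicator_of_notMem hy, hHzero y hy]
      simp
  have hHmeas : Measurable H := (hfmono.measurable).sub (hgmono.measurable)
  have hHint : Integrable H := by
    refine Integrable.mono' ?_ hHmeas.aestronglyMeasurable (Filter.Eventually.of_forall hHbd)
    refine (integrableOn_const ?_).integrable_indicator measurableSet_Icc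
    exact measure_Icc_lt_top.ne
  have habs : Integrable (fun y => |H y|) := hHint.abs
  set I : ℝ := ∫ y, |H y| with hI
  have hI0 : 0 ≤ I := integral_nonneg fun y => abs_nonneg _
  have hcompint : ∀ d : ℕ, Integrable (fun y : ℝ => |H ((N : ℝ) * y - d)|) := by
    intro d
    have h1 : Integrable (fun y : ℝ => |H (y - (d : ℝ))|) := habs.comp_sub_right _
    have h2 := h1.comp_mul_left' (R := (N : ℝ)) (by positivity)
    simpa using h2
  have hval : ∀ d : ℕ, (∫ y : ℝ, |H ((N : ℝ) * y - d)|) = (N : ℝ)⁻¹ * I := by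
    intro d
    have h1 : (∫ y : ℝ, |H ((N : ℝ) * y - d)|)
        = |((N : ℝ))⁻¹| • ∫ z : ℝ, |H (z - d)| :=
      MeasureTheory.Measure.integral_comp_mul_left (fun z => |H (z - d)|) (N : ℝ)
    rw [h1, integral_sub_right_eq_self (fun z => |H z|) (d : ℝ)]
    rw [abs_of_nonneg (by positivity : (0:ℝ) ≤ ((N:ℝ))⁻¹), smul_eq_mul]
  have hIle : I ≤ (N : ℝ)⁻¹ * I := by
    have step1 : I ≤ ∫ y, (D.card : ℝ)⁻¹ * ∑ d ∈ D, |H ((N : ℝ) * y - d)| := by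
      refine integral_mono habs ?_ ?_
      · exact (integrable_finset_sum D fun d _ => hcompint d).const_mul _
      · intro y
        show |H y| ≤ (D.card : ℝ)⁻¹ * ∑ d ∈ D, |H ((N : ℝ) * y - d)|
        rw [hHeq y, abs_mul, abs_of_nonneg (inv_nonneg.2 (Nat.cast_nonneg _) : (0:ℝ) ≤ (D.card : ℝ)⁻¹)]
        exact mul_le_mul_of_nonneg_left (Finset.abs_sum_le_sum_abs _ _) (inv_nonneg.2 (Nat.cast_nonneg _))
    have step2 : (∫ y, (D.card : ℝ)⁻¹ * ∑ d ∈ D, |H ((N : ℝ) * y - d)|)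
        = (N : ℝ)⁻¹ * I := by
      rw [integral_const_mul, integral_finset_sum D fun d _ => hcompint d]
      rw [Finset.sum_congr rfl fun d _ => hval d, Finset.sum_const, nsmul_eq_mul]
      rw [← mul_assoc, inv_mul_cancel₀ (ne_of_gt hmR), one_mul]
    linarith [step1, step2.symm.le, step2.le]
  have hIzero : I = 0 := by
    have hNinv : (N : ℝ)⁻¹ ≤ 1 / 2 := by
      rw [inv_le_comm₀ (by linarith) (by norm_num)]
      linarith
    nlinarith
  have hae : ∀ᵐ y : ℝ, f y = g y := by
    have h1 : (fun y => |H y|) =ᵐ[volume] 0 :=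
      (integral_eq_zero_iff_of_nonneg (fun y => abs_nonneg (H y)) habs).1 hIzero
    filter_upwards [h1] with y hy
    have h2 : H y = 0 := abs_eq_zero.1 hy
    have h3 : f y - g y = 0 := h2
    linarith
  -- right continuity
  have hfc : ∀ y : ℝ, ContinuousWithinAt f (Ici y) y := by
    intro y
    have : f = fun z => ProbabilityTheory.cdf μ1 z :=
      funext fun z => (ProbabilityTheory.cdf_eq_real _ z).symm
    rw [this]
    exact (ProbabilityTheory.cdf μ1).right_continuous y
  have hgc : ∀ y : ℝ, ContinuousWithinAt g (Ici y) y := by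
    intro y
    have : g = fun z => ProbabilityTheory.cdf μ2 z :=
      funext fun z => (ProbabilityTheory.cdf_eq_real _ z).symm
    rw [this]
    exact (ProbabilityTheory.cdf μ2).right_continuous y
  have hfg : f x = g x := by
    set S : Set ℝ := {y | f y = g y} with hSdef
    have hSc : volume Sᶜ = 0 := by
      have : Sᶜ = {y | ¬ (f y = g y)} := by
        ext y; simp [hSdef]
      rw [this]
      exact hae
    have hclos : x ∈ closure (S ∩ Ioi x) := by
      refine mem_closure_iff.2 fun U hU hxU => ?_
      obtain ⟨ε, hε, hball⟩ := Metric.isOpen_iff.1 hU x hxU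
      have hsub : Ioo x (x + ε) ⊆ U := by
        intro y hy
        apply hball
        rw [Metric.mem_ball, Real.dist_eq, abs_lt]
        constructor <;> [linarith [hy.1, hy.2]; linarith [hy.1, hy.2]]
      have hvol : volume (Ioo x (x + ε)) ≠ 0 := by
        rw [Real.volume_Ioo]
        simp only [ne_eq, ENNReal.ofReal_eq_zero, not_le]
        linarith
      have hmeet : ¬ (Ioo x (x + ε) ⊆ Sᶜ) := by
        intro hcon
        exact hvol (measure_mono_null hcon hSc)
      rw [Set.not_subset] at hmeet
      obtain ⟨y, hy1, hy2⟩ := hmeet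
      rw [Set.notMem_compl_iff] at hy2
      exact ⟨y, hsub hy1, hy2, hy1.1⟩
    have hne2 : (nhdsWithin x (S ∩ Ioi x)).NeBot :=
      mem_closure_iff_nhdsWithin_neBot.1 hclos
    have hsub2 : S ∩ Ioi x ⊆ Ici x := fun y hy => mem_Ici.2 (le_of_lt hy.2)
    have h1 : Filter.Tendsto f (nhdsWithin x (S ∩ Ioi x)) (nhds (f x)) :=
      (hfc x).mono_left (nhdsWithin_mono x hsub2)
    have h2 : Filter.Tendsto g (nhdsWithin x (S ∩ Ioi x)) (nhds (g x)) :=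
      (hgc x).mono_left (nhdsWithin_mono x hsub2)
    have h3 : Filter.Tendsto f (nhdsWithin x (S ∩ Ioi x)) (nhds (g x)) := by
      refine h2.congr' ?_
      filter_upwards [self_mem_nhdsWithin] with y hy
      exact hy.1.symm
    exact tendsto_nhds_unique h1 h3
  exact (ENNReal.toReal_eq_toReal_iff' (measure_ne_top _ _) (measure_ne_top _ _)).1 hfg

end CantorRevAux

theorem cantor_cdf_reversal_symmetry
    (N : ℕ) (hN : 3 ≤ N) (D : Finset ℕ) (hD : D ⊆ Finset.range N)
    (hcard : 2 ≤ D.card) (hcard' : D.card ≤ N - 1)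
    (μ ν : Measure ℝ) [IsProbabilityMeasure μ] [IsProbabilityMeasure ν]
    (hμsupp : μ (Set.Icc 0 1) = 1)
    (hμinv : μ = (D.card : ℝ≥0∞)⁻¹ • ∑ d ∈ D, μ.map (fun x : ℝ => (x + (d : ℝ)) / N))
    -- ν is the invariant measure of the reversed digit set Ď = {N - 1 - d : d ∈ D}
    (hνsupp : ν (Set.Icc 0 1) = 1)
    (hνinv : ν = ((D.image (fun d => N - 1 - d)).card : ℝ≥0∞)⁻¹ •
        ∑ d ∈ D.image (fun d => N - 1 - d), ν.map (fun x : ℝ => (x + (d : ℝ)) / N)) :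
    ∀ x ∈ Set.Icc (0:ℝ) 1,
      (ν (Set.Icc 0 x)).toReal = 1 - (μ (Set.Icc 0 (1 - x))).toReal := by
  classical
  have hN2 : 2 ≤ N := by omega
  have hN0 : 0 < N := by omega
  have hNR : (0 : ℝ) < N := by exact_mod_cast hN0
  set r : ℝ → ℝ := fun x => 1 - x with hrdef
  have hrmeas : Measurable r := measurable_const.sub measurable_id
  set ν' : Measure ℝ := μ.map r with hν'def
  haveI : IsProbabilityMeasure ν' := Measure.isProbabilityMeasure_map hrmeas.aemeasurable
  set Dr : Finset ℕ := D.image (fun d => N - 1 - d) with hDrdef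
  have hinjOn : ∀ a ∈ D, ∀ b ∈ D, N - 1 - a = N - 1 - b → a = b := by
    intro a ha b hb hab
    have ha' : a < N := Finset.mem_range.1 (hD ha)
    have hb' : b < N := Finset.mem_range.1 (hD hb)
    omega
  have hDrcard : Dr.card = D.card := Finset.card_image_of_injOn hinjOn
  -- support of ν'
  have hpre_Icc : r ⁻¹' (Icc (0:ℝ) 1) = Icc (0:ℝ) 1 := by
    ext y
    simp only [hrdef, mem_preimage, mem_Icc]
    constructor <;> intro h <;> constructor <;> linarith [h.1, h.2]
  have hν'supp : ν' (Icc (0:ℝ) 1) = 1 := by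
    rw [hν'def, Measure.map_apply hrmeas measurableSet_Icc, hpre_Icc, hμsupp]
  -- invariance of ν'
  have hcomp : ∀ d ∈ D,
      (fun x : ℝ => (x + ((N - 1 - d : ℕ) : ℝ)) / N) ∘ r
        = r ∘ (fun x : ℝ => (x + (d : ℝ)) / N) := by
    intro d hd
    have hd' : d < N := Finset.mem_range.1 (hD hd)
    have hcast : ((N - 1 - d : ℕ) : ℝ) = (N : ℝ) - 1 - d := by
      have h1 : ((N - 1 - d : ℕ) : ℝ) = ((N - 1 : ℕ) : ℝ) - (d : ℝ) := by
        rw [Nat.cast_sub (by omega : d ≤ N - 1)]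
      have h2 : ((N - 1 : ℕ) : ℝ) = (N : ℝ) - 1 := by
        rw [Nat.cast_sub (by omega : 1 ≤ N)]
        simp
      rw [h1, h2]
    funext x
    simp only [Function.comp_apply, hrdef, hcast]
    field_simp
    ring
  have hmapmap : ∀ d ∈ D,
      ν'.map (fun x : ℝ => (x + ((N - 1 - d : ℕ) : ℝ)) / N)
        = (μ.map (fun x : ℝ => (x + (d : ℝ)) / N)).map r := by
    intro d hd
    rw [hν'def, Measure.map_map (CantorRevAux.map_meas N (N - 1 - d)) hrmeas,
      Measure.map_map hrmeas (CantorRevAux.map_meas N d), hcomp d hd]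
  have hmapsum : (∑ d ∈ D, μ.map (fun x : ℝ => (x + (d : ℝ)) / N)).map r
      = ∑ d ∈ D, (μ.map (fun x : ℝ => (x + (d : ℝ)) / N)).map r := by
    ext s hs
    rw [Measure.map_apply hrmeas hs, Measure.finset_sum_apply, Measure.finset_sum_apply]
    exact Finset.sum_congr rfl fun d _ =>
      (Measure.map_apply hrmeas hs).symm
  have hν'inv : ν' = (Dr.card : ℝ≥0∞)⁻¹ •
      ∑ d ∈ Dr, ν'.map (fun x : ℝ => (x + (d : ℝ)) / N) := by
    have hsum : ∑ d ∈ Dr, ν'.map (fun x : ℝ => (x + (d : ℝ)) / N)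
        = ∑ d ∈ D, ν'.map (fun x : ℝ => (x + ((N - 1 - d : ℕ) : ℝ)) / N) := by
      rw [hDrdef]
      exact Finset.sum_image hinjOn
    rw [hsum, Finset.sum_congr rfl hmapmap, hDrcard, ← hmapsum]
    rw [← Measure.map_smul, ← hμinv, hν'def]
  -- uniqueness: ν and ν' agree on Iic
  have hDrsub : Dr ⊆ Finset.range N := by
    intro a ha
    rw [hDrdef, Finset.mem_image] at ha
    obtain ⟨d, _, rfl⟩ := ha
    exact Finset.mem_range.2 (by omega)
  have hDrne : Dr.Nonempty := by
    obtain ⟨d, hd⟩ := Finset.card_pos.1 (by omega : 0 < D.card)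
    exact ⟨N - 1 - d, Finset.mem_image_of_mem _ hd⟩
  have hνinv' : ν = (Dr.card : ℝ≥0∞)⁻¹ •
      ∑ d ∈ Dr, ν.map (fun x : ℝ => (x + (d : ℝ)) / N) := hνinv
  have hIic : ∀ y : ℝ, ν (Iic y) = ν' (Iic y) := fun y =>
    CantorRevAux.Iic_eq N hN2 Dr hDrne ν ν' hνsupp hν'supp hνinv' hν'inv y
  -- atomlessness of μ
  have hatom : ∀ p : ℝ, μ {p} = 0 :=
    CantorRevAux.atomless N hN2 D hD hcard μ hμinv
  -- final computation
  intro x hx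
  obtain ⟨hx0, hx1⟩ := hx
  have ht0 : (0:ℝ) ≤ 1 - x := by linarith
  have ht1 : (1:ℝ) - x ≤ 1 := by linarith
  -- ν (Icc 0 x) = ν (Iic x)
  have h1 : ν (Icc 0 x) = ν (Iic x) := by
    refine le_antisymm (measure_mono Icc_subset_Iic_self) ?_
    calc ν (Iic x) ≤ ν (Iio 0 ∪ Icc 0 x) := by
          refine measure_mono fun y hy => ?_
          rcases lt_or_ge y 0 with h | h
          · exact Or.inl h
          · exact Or.inr ⟨h, mem_Iic.1 hy⟩
      _ ≤ ν (Iio 0) + ν (Icc 0 x) := measure_union_le _ _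
      _ = ν (Icc 0 x) := by
          rw [CantorRevAux.Iio_zero_null ν hνsupp, zero_add]
  -- ν' (Iic x) = μ (Ici (1 - x))
  have h2 : ν' (Iic x) = μ (Ici (1 - x)) := by
    rw [hν'def, Measure.map_apply hrmeas measurableSet_Iic]
    congr 1
    ext y
    simp only [hrdef, mem_preimage, mem_Iic, mem_Ici]
    constructor <;> intro h <;> linarith
  -- μ (Ici (1-x)) = 1 - μ (Iio (1-x))
  have h3 : μ (Ici (1 - x)) = 1 - μ (Iio (1 - x)) := by
    rw [← compl_Iio, measure_compl measurableSet_Iio (measure_ne_top μ _), measure_univ]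
  -- μ (Iio (1-x)) = μ (Icc 0 (1-x))
  have h4 : μ (Iio (1 - x)) = μ (Icc 0 (1 - x)) := by
    refine le_antisymm ?_ ?_
    · calc μ (Iio (1 - x)) ≤ μ (Iio 0 ∪ Icc 0 (1 - x)) := by
            refine measure_mono fun y hy => ?_
            rcases lt_or_ge y 0 with h | h
            · exact Or.inl h
            · exact Or.inr ⟨h, le_of_lt (mem_Iio.1 hy)⟩
        _ ≤ μ (Iio 0) + μ (Icc 0 (1 - x)) := measure_union_le _ _
        _ = μ (Icc 0 (1 - x)) := by
            rw [CantorRevAux.Iio_zero_null μ hμsupp, zero_add]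
    · calc μ (Icc 0 (1 - x)) ≤ μ (Iio (1 - x) ∪ {1 - x}) := by
            refine measure_mono fun y hy => ?_
            rcases lt_or_eq_of_le hy.2 with h | h
            · exact Or.inl h
            · exact Or.inr h
        _ ≤ μ (Iio (1 - x)) + μ {1 - x} := measure_union_le _ _
        _ = μ (Iio (1 - x)) := by rw [hatom, add_zero]
  have hfinal : ν (Icc 0 x) = 1 - μ (Icc 0 (1 - x)) := by
    rw [h1, hIic x, h2, h3, h4]
  rw [hfinal]
  rw [ENNReal.toReal_sub_of_le prob_le_one ENNReal.one_ne_top, ENNReal.toReal_one]
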